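/- Let h₁,…,h_ℓ ∈ F_q[X] be polynomials, γ ∈ F_q^×, α ∈ F_q, and s ≥ ℓ. Suppose that for some t ≤ ℓ the polynomials h₁,…,h_t all vanish at γ^j α for every j = 0,1,…,s-1, and that the powers γ^0α, γ^1α, …, γ^{s-1}α are pairwise distinct and nonzero. Then for each j with 0 ≤ j ≤ s-ℓ, the point γ^j α is a root of det W_γ(h₁,…,h_ℓ)(X) with multiplicity at least t, where W_γ has (i,j)-entry h_j(γ^{i-1}X). -/
import Mathlib


open Polynomial

/-- If `h 0, …, h (t-1)` all vanish at the `s` points `γ^j α` (`0 ≤ j < s`), which are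
pairwise distinct and nonzero, then for each `0 ≤ j ≤ s - ℓ` the point `γ^j α` is a root
of the folded Wronskian determinant of `h 0, …, h (ℓ-1)` with multiplicity at least `t`. -/
theorem foldedWronskian_det_root_multiplicity {F : Type*} [Field F]
    {ℓ s t : ℕ} (hsℓ : ℓ ≤ s) (htℓ : t ≤ ℓ)
    (γ : Fˣ) (α : F) (hα : α ≠ 0)
    (hdist : ∀ j j' : ℕ, j < s → j' < s → (γ : F) ^ j * α = (γ : F) ^ j' * α → j = j')
    (h : Fin ℓ → F[X])
    (hvanish : ∀ v : Fin ℓ, (v : ℕ) < t → ∀ j < s, (h v).eval ((γ : F) ^ j * α) = 0) :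
    ∀ j ≤ s - ℓ,
      (X - Polynomial.C ((γ : F) ^ j * α)) ^ t ∣
        (Matrix.of fun u v : Fin ℓ =>
          (h v).comp (Polynomial.C ((γ : F) ^ (u : ℕ)) * X)).det := by
  intro j hj
  rw [Matrix.det_apply]
  apply Finset.dvd_sum
  intro σ _
  rw [Units.smul_def, zsmul_eq_mul]
  apply Dvd.dvd.mul_left
  -- each of the t factors with index i < t is divisible by (X - C (γ^j α))
  set a := (γ : F) ^ j * α with ha
  have S : Finset (Fin ℓ) := Finset.univ.filter (fun i => (i : ℕ) < t)
  rw [← Finset.prod_filter_mul_prod_filter_not Finset.univ (fun i : Fin ℓ => (i : ℕ) < t)]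
  apply dvd_mul_of_dvd_left
  have hcard : (Finset.univ.filter (fun i : Fin ℓ => (i : ℕ) < t)).card = t := by
    have : Finset.univ.filter (fun i : Fin ℓ => (i : ℕ) < t)
        = (Finset.univ : Finset (Fin t)).map ⟨Fin.castLE htℓ, Fin.castLE_injective htℓ⟩ := by
      ext i
      simp only [Finset.mem_filter, Finset.mem_univ, true_and, Finset.mem_map,
        Function.Embedding.coeFn_mk]
      constructor
      · intro hi; exact ⟨⟨i, hi⟩, by simp⟩
      · rintro ⟨k, rfl⟩; exact k.2
    rw [this, Finset.card_map, Finset.card_univ, Fintype.card_fin]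
  calc (X - C a) ^ t
      = ∏ i ∈ Finset.univ.filter (fun i : Fin ℓ => (i : ℕ) < t), (X - C a) := by
        rw [Finset.prod_const, hcard]
    _ ∣ _ := by
        apply Finset.prod_dvd_prod_of_dvd
        intro i hi
        rw [Finset.mem_filter] at hi
        rw [dvd_iff_isRoot]
        simp only [Matrix.of_apply, IsRoot, eval_comp, eval_mul, eval_C, eval_X]
        have : (γ : F) ^ (σ i : ℕ) * a = (γ : F) ^ ((σ i : ℕ) + j) * α := by
          rw [ha, pow_add, mul_assoc]
        rw [this]
        exact hvanish i hi.2 _ (by omega)
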